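/- Let F be a field, n a positive integer, and A an n × n matrix over F that is not invertible (equivalently, det A = 0). Then A is a product of finitely many idempotent n × n matrices over F. -/

import Mathlib

open Matrix

namespace ErdosIdem

variable {F : Type*} [Field F]

/-- `A` is a product of (possibly zero) idempotent matrices. -/
def IsIdemProd {ι : Type*} [Fintype ι] [DecidableEq ι] (A : Matrix ι ι F) : Prop :=
  ∃ l : List (Matrix ι ι F), (∀ E ∈ l, E * E = E) ∧ A = l.prod

section Basic

variable {ι : Type*} [Fintype ι] [DecidableEq ι]

lemma IsIdemProd.of_idem {A : Matrix ι ι F} (h : A * A = A) : IsIdemProd A :=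
  ⟨[A], by intro E hE; simp only [List.mem_singleton] at hE; subst hE; exact h, by simp⟩

lemma IsIdemProd.mul {A B : Matrix ι ι F} (hA : IsIdemProd A) (hB : IsIdemProd B) :
    IsIdemProd (A * B) := by
  obtain ⟨l1, h1, rfl⟩ := hA
  obtain ⟨l2, h2, rfl⟩ := hB
  refine ⟨l1 ++ l2, ?_, (List.prod_append).symm⟩
  intro E hE
  rcases List.mem_append.1 hE with h | h
  exacts [h1 E h, h2 E h]

lemma IsIdemProd.conj {A S T : Matrix ι ι F} (h : IsIdemProd A)
    (hST : S * T = 1) (hTS : T * S = 1) : IsIdemProd (T * A * S) := by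
  obtain ⟨l, hl, rfl⟩ := h
  refine ⟨l.map (fun E => T * E * S), ?_, ?_⟩
  · intro E hE
    obtain ⟨E', hE', rfl⟩ := List.mem_map.1 hE
    have hidem := hl E' hE'
    calc (T * E' * S) * (T * E' * S) = T * (E' * (S * T) * E') * S := by
          simp only [Matrix.mul_assoc]
      _ = T * E' * S := by rw [hST, Matrix.mul_one, hidem]
  · induction l with
    | nil => simp [hTS]
    | cons a t ih =>
        have ht : ∀ E ∈ t, E * E = E := fun E hE => hl E (List.mem_cons_of_mem a hE)
        simp only [List.map_cons, List.prod_cons]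
        rw [← ih ht]
        calc T * (a * t.prod) * S = (T * a) * (S * T) * (t.prod * S) := by
              rw [hST]; simp only [Matrix.mul_assoc, Matrix.mul_one, Matrix.one_mul]
          _ = (T * a * S) * (T * t.prod * S) := by simp only [Matrix.mul_assoc]

lemma IsIdemProd.of_submatrix {κ : Type*} [Fintype κ] [DecidableEq κ] {A : Matrix ι ι F} (e : κ ≃ ι)
    (h : IsIdemProd (A.submatrix e e)) : IsIdemProd A := by
  obtain ⟨l, hl, hp⟩ := h
  have hmul : ∀ X Y : Matrix κ κ F,
      (X.submatrix ⇑e.symm ⇑e.symm : Matrix ι ι F) * (Y.submatrix ⇑e.symm ⇑e.symm : Matrix ι ι F)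
        = ((X * Y).submatrix ⇑e.symm ⇑e.symm : Matrix ι ι F) := by
    intro X Y
    ext i j
    simp only [Matrix.mul_apply, Matrix.submatrix_apply]
    exact Fintype.sum_equiv e.symm _ _ (fun k => rfl)
  refine ⟨l.map (fun E => E.submatrix ⇑e.symm ⇑e.symm), ?_, ?_⟩
  · intro E hE
    obtain ⟨E', hE', rfl⟩ := List.mem_map.1 hE
    rw [hmul, hl E' hE']
  · have hprod : ∀ l' : List (Matrix κ κ F),
        (l'.map (fun E => E.submatrix ⇑e.symm ⇑e.symm)).prod = l'.prod.submatrix ⇑e.symm ⇑e.symm := by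
      intro l'
      induction l' with
      | nil => simp
      | cons a t ih =>
          simp only [List.map_cons, List.prod_cons, ih, hmul]
    rw [hprod, ← hp]
    ext i j
    simp

end Basic

section Core

variable {ι : Type*} [Fintype ι] [DecidableEq ι]

/-- Key: the `(m+1)`-size bordered version of a rank-one update of the identity is a
product of two idempotents. -/
lemma isIdemProd_fromBlocks_one_add_vecMulVec (v w : ι → F) :
    IsIdemProd (fromBlocks (1 + vecMulVec v w) 0 0 (0 : Matrix (Fin 1) (Fin 1) F)) := by
  set V : Matrix ι (Fin 1) F := Matrix.of (fun i _ => v i) with hV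
  set W : Matrix (Fin 1) ι F := Matrix.of (fun _ j => w j) with hW
  have hVW : V * W = vecMulVec v w := by
    ext i j
    simp [Matrix.mul_apply, vecMulVec_apply, V, W]
  refine ⟨[fromBlocks 1 V 0 0, fromBlocks 1 0 W 0], ?_, ?_⟩
  · intro E hE
    simp only [List.mem_cons, List.not_mem_nil, or_false] at hE
    rcases hE with rfl | rfl <;>
      simp [fromBlocks_multiply]
  · simp [fromBlocks_multiply, hVW]

lemma isIdemProd_fromBlocks_zero (B : Matrix ι ι F) :
    IsIdemProd (fromBlocks B 0 0 (0 : Matrix (Fin 1) (Fin 1) F)) := by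
  -- reduce to products of rank-one updates of 1
  have key : ∀ X : Matrix ι ι F, (∃ v w : ι → F, X = 1 + vecMulVec v w) →
      IsIdemProd (fromBlocks X 0 0 (0 : Matrix (Fin 1) (Fin 1) F)) := by
    rintro X ⟨v, w, rfl⟩
    exact isIdemProd_fromBlocks_one_add_vecMulVec v w
  have hlist : ∀ l : List (Matrix ι ι F),
      (∀ X ∈ l, IsIdemProd (fromBlocks X 0 0 (0 : Matrix (Fin 1) (Fin 1) F))) →
      IsIdemProd (fromBlocks l.prod 0 0 (0 : Matrix (Fin 1) (Fin 1) F)) := by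
    intro l
    induction l with
    | nil =>
        intro _
        apply IsIdemProd.of_idem
        simp [fromBlocks_multiply]
    | cons a t ih =>
        intro h
        have : fromBlocks (a :: t).prod 0 0 (0 : Matrix (Fin 1) (Fin 1) F)
            = fromBlocks a 0 0 0 * fromBlocks t.prod 0 0 0 := by
          simp [fromBlocks_multiply]
        rw [this]
        exact (h a List.mem_cons_self).mul (ih (fun X hX => h X (List.mem_cons_of_mem a hX)))
  obtain ⟨L, L', D, hB⟩ := Matrix.Pivot.exists_list_transvec_mul_diagonal_mul_list_transvec B
  -- expand the diagonal as a list product of rank-one updates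
  have hdiag : ∀ l : List ι, l.Nodup →
      ((l.map (fun i => (1 + vecMulVec (Pi.single i (D i - 1)) (Pi.single i 1) : Matrix ι ι F))).prod)
        = Matrix.diagonal (fun k => if k ∈ l then D k else 1) := by
    intro l hl
    induction l with
    | nil => simp [Matrix.diagonal_one]
    | cons a t ih =>
        have ha : a ∉ t := (List.nodup_cons.1 hl).1
        have hone : (1 + vecMulVec (Pi.single a (D a - 1)) (Pi.single a 1) : Matrix ι ι F)
            = Matrix.diagonal (fun k => if k = a then D a else 1) := by
          ext i j
          by_cases hij : i = j
          · subst hij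
            by_cases hia : i = a <;>
              simp [Matrix.add_apply, Matrix.one_apply, vecMulVec_apply, Pi.single_apply,
                Matrix.diagonal_apply, hia]
          · by_cases hia : i = a <;> by_cases hja : j = a <;>
              simp_all [Matrix.add_apply, Matrix.one_apply, vecMulVec_apply, Pi.single_apply,
                Matrix.diagonal_apply]
        simp only [List.map_cons, List.prod_cons, ih (List.nodup_cons.1 hl).2, hone,
          Matrix.diagonal_mul_diagonal]
        apply congrArg Matrix.diagonal
        funext k
        by_cases hk : k = a
        · subst hk; simp [ha]
        · simp [hk, List.mem_cons]
  have hD : Matrix.diagonal D =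
      ((Finset.univ.toList (α := ι)).map
        (fun i => (1 + vecMulVec (Pi.single i (D i - 1)) (Pi.single i 1) : Matrix ι ι F))).prod := by
    rw [hdiag _ (Finset.nodup_toList _)]
    congr 1
    funext k
    simp [Finset.mem_toList]
  rw [hB]
  set lfull : List (Matrix ι ι F) :=
    (L.map Matrix.TransvectionStruct.toMatrix)
      ++ ((Finset.univ.toList (α := ι)).map
        (fun i => (1 + vecMulVec (Pi.single i (D i - 1)) (Pi.single i 1) : Matrix ι ι F)))
      ++ (L'.map Matrix.TransvectionStruct.toMatrix) with hlfull
  have hprod : (L.map Matrix.TransvectionStruct.toMatrix).prod * Matrix.diagonal D *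
      (L'.map Matrix.TransvectionStruct.toMatrix).prod = lfull.prod := by
    rw [hlfull]
    simp only [List.prod_append, hD]
  rw [hprod]
  apply hlist
  intro X hX
  apply key
  rw [hlfull] at hX
  simp only [List.mem_append, List.mem_map] at hX
  rcases hX with (⟨t, _, rfl⟩ | ⟨i, _, rfl⟩) | ⟨t, _, rfl⟩
  · refine ⟨Pi.single t.i t.c, Pi.single t.j 1, ?_⟩
    rw [Matrix.TransvectionStruct.toMatrix, Matrix.transvection]
    congr 1
    ext a b
    simp only [Matrix.single, vecMulVec_apply, Pi.single_apply, Matrix.of_apply]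
    split_ifs <;> simp_all
  · exact ⟨_, _, rfl⟩
  · refine ⟨Pi.single t.i t.c, Pi.single t.j 1, ?_⟩
    rw [Matrix.TransvectionStruct.toMatrix, Matrix.transvection]
    congr 1
    ext a b
    simp only [Matrix.single, vecMulVec_apply, Pi.single_apply, Matrix.of_apply]
    split_ifs <;> simp_all

end Core

section Main

lemma isIdemProd_of_det_eq_zero :
    ∀ (n : ℕ) (A : Matrix (Fin n) (Fin n) F), A.det = 0 → IsIdemProd A := by
  intro n
  induction n with
  | zero =>
      intro A hA
      rw [Matrix.det_isEmpty] at hA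
      exact absurd hA.symm zero_ne_one
  | succ n ih =>
      intro A hA
      -- a nonzero left-kernel vector
      obtain ⟨w0, hw0ne, hw0⟩ := (Matrix.exists_vecMul_eq_zero_iff).2 hA
      obtain ⟨j, hj⟩ := Function.ne_iff.1 hw0ne
      rw [Pi.zero_apply] at hj
      set τ : Equiv.Perm (Fin (n + 1)) := Equiv.swap j (Fin.last n) with hτ
      set A1 : Matrix (Fin (n + 1)) (Fin (n + 1)) F := A.submatrix ⇑τ ⇑τ with hA1
      set w1 : Fin (n + 1) → F := (w0 j)⁻¹ • (w0 ∘ ⇑τ) with hw1def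
      have hw1last : w1 (Fin.last n) = 1 := by
        simp only [hw1def, Pi.smul_apply, Function.comp_apply, hτ, Equiv.swap_apply_right,
          smul_eq_mul]
        exact inv_mul_cancel₀ hj
      have hw1 : w1 ᵥ* A1 = 0 := by
        have h1 : w1 ∘ ⇑τ.symm = (w0 j)⁻¹ • w0 := by
          funext i
          simp [hw1def]
        rw [hA1, Matrix.submatrix_vecMul_equiv, h1, Matrix.smul_vecMul, hw0]
        funext k
        simp
      -- conjugating matrix with explicit inverse
      set u : Fin (n + 1) → F := Pi.single (Fin.last n) (1 : F) with hu
      set X : Matrix (Fin (n + 1)) (Fin (n + 1)) F := vecMulVec u (w1 - u) with hX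
      set S : Matrix (Fin (n + 1)) (Fin (n + 1)) F := 1 + X with hS
      set T : Matrix (Fin (n + 1)) (Fin (n + 1)) F := 1 - X with hT
      have hXX : X * X = 0 := by
        ext i k
        rw [Matrix.mul_apply, Matrix.zero_apply]
        apply Finset.sum_eq_zero
        intro p _
        rcases eq_or_ne p (Fin.last n) with hp | hp
        · have : (w1 - u) p = 0 := by
            rw [hp]
            simp [hu, hw1last]
          rw [hX]
          simp [vecMulVec_apply, this]
        · have : u p = 0 := by
            rw [hu]
            exact Pi.single_eq_of_ne hp 1
          rw [hX]
          simp [vecMulVec_apply, this]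
      have hST : S * T = 1 := by
        have h2 : S * T = 1 - X * X := by rw [hS, hT]; noncomm_ring
        rw [h2, hXX, sub_zero]
      have hTS : T * S = 1 := by
        have h2 : T * S = 1 - X * X := by rw [hS, hT]; noncomm_ring
        rw [h2, hXX, sub_zero]
      have hSlast : ∀ i, S (Fin.last n) i = w1 i := by
        intro i
        rcases eq_or_ne i (Fin.last n) with hi | hi
        · subst hi
          simp [hS, hX, Matrix.add_apply, Matrix.one_apply, vecMulVec_apply, hu]
        · simp [hS, hX, Matrix.add_apply, Matrix.one_apply, vecMulVec_apply, hu,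
            Pi.single_eq_of_ne hi, Ne.symm hi]
      set M : Matrix (Fin (n + 1)) (Fin (n + 1)) F := S * (A1 * T) with hM
      have hrow : ∀ k, M (Fin.last n) k = 0 := by
        intro k
        have h3 : M (Fin.last n) k = (w1 ᵥ* (A1 * T)) k := by
          rw [hM, Matrix.mul_apply]
          simp only [Matrix.vecMul, dotProduct]
          exact Finset.sum_congr rfl (fun i _ => by rw [hSlast i])
        rw [h3, ← Matrix.vecMul_vecMul, hw1, Matrix.zero_vecMul]
        simp
      set e : Fin n ⊕ Fin 1 ≃ Fin (n + 1) := finSumFinEquiv with he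
      have helast : e (Sum.inr 0) = Fin.last n := by
        apply Fin.ext
        simp [he, Fin.last]
      set M' : Matrix (Fin n ⊕ Fin 1) (Fin n ⊕ Fin 1) F := M.submatrix ⇑e ⇑e with hM'
      set B : Matrix (Fin n) (Fin n) F := M'.toBlocks₁₁ with hB
      set C : Matrix (Fin n) (Fin 1) F := M'.toBlocks₁₂ with hC
      have h21 : M'.toBlocks₂₁ = 0 := by
        ext i k
        have hi : i = 0 := Subsingleton.elim i 0
        subst hi
        simp only [Matrix.toBlocks₂₁, Matrix.of_apply, hM', Matrix.submatrix_apply, helast,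
          Matrix.zero_apply]
        exact hrow _
      have h22 : M'.toBlocks₂₂ = 0 := by
        ext i k
        have hi : i = 0 := Subsingleton.elim i 0
        subst hi
        simp only [Matrix.toBlocks₂₂, Matrix.of_apply, hM', Matrix.submatrix_apply, helast,
          Matrix.zero_apply]
        exact hrow _
      have hM'blocks : M' = fromBlocks B C 0 0 := by
        conv_lhs => rw [← Matrix.fromBlocks_toBlocks M']
        rw [h21, h22, hB, hC]
      have hM'IIP : IsIdemProd M' := by
        by_cases hdB : B.det = 0
        · obtain ⟨l, hl, hpl⟩ := ih B hdB
          have hlist : ∀ l' : List (Matrix (Fin n) (Fin n) F),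
              (l'.map (fun E => fromBlocks E 0 0 (1 : Matrix (Fin 1) (Fin 1) F))).prod
                = fromBlocks l'.prod 0 0 1 := by
            intro l'
            induction l' with
            | nil => simp [Matrix.fromBlocks_one]
            | cons a t iht =>
                simp only [List.map_cons, List.prod_cons, iht, fromBlocks_multiply]
                simp
          have h2 : IsIdemProd (fromBlocks B 0 0 (1 : Matrix (Fin 1) (Fin 1) F)) := by
            refine ⟨l.map (fun E => fromBlocks E 0 0 (1 : Matrix (Fin 1) (Fin 1) F)), ?_, ?_⟩
            · intro E hE
              obtain ⟨E', hE', rfl⟩ := List.mem_map.1 hE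
              have := hl E' hE'
              simp [fromBlocks_multiply, this]
            · rw [hlist, hpl]
          have h1 : IsIdemProd (fromBlocks (1 : Matrix (Fin n) (Fin n) F) C 0 0) :=
            IsIdemProd.of_idem (by simp [fromBlocks_multiply])
          have hsplit : M' = fromBlocks (1 : Matrix (Fin n) (Fin n) F) C 0 0 *
              fromBlocks B 0 0 (1 : Matrix (Fin 1) (Fin 1) F) := by
            rw [hM'blocks]
            simp [fromBlocks_multiply]
          rw [hsplit]
          exact h1.mul h2
        · have hBB : B * B⁻¹ = 1 := Matrix.mul_nonsing_inv B (isUnit_iff_ne_zero.2 hdB)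
          have hsplit : M' = fromBlocks B 0 0 (0 : Matrix (Fin 1) (Fin 1) F) *
              fromBlocks 1 (B⁻¹ * C) 0 0 := by
            have hBC : B * (B⁻¹ * C) = C := by rw [← Matrix.mul_assoc, hBB, Matrix.one_mul]
            rw [hM'blocks, fromBlocks_multiply]
            simp [hBC]
          rw [hsplit]
          exact (isIdemProd_fromBlocks_zero B).mul
            (IsIdemProd.of_idem (by simp [fromBlocks_multiply]))
      have hMIIP : IsIdemProd M := IsIdemProd.of_submatrix e (by rwa [← hM'])
      have hA1IIP : IsIdemProd A1 := by
        have := hMIIP.conj hST hTS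
        have heq : T * M * S = A1 := by
          rw [hM, ← Matrix.mul_assoc T S, hTS, Matrix.one_mul, Matrix.mul_assoc A1 T S, hTS,
            Matrix.mul_one]
        rwa [heq] at this
      exact IsIdemProd.of_submatrix τ hA1IIP

end Main

end ErdosIdem

/-- Erdős: every singular square matrix over a field is a product
of finitely many idempotent matrices. -/
theorem singular_matrix_product_of_idempotents {F : Type*} [Field F]
    (n : ℕ) (hn : 0 < n) (A : Matrix (Fin n) (Fin n) F) (hA : A.det = 0) :
    ∃ l : List (Matrix (Fin n) (Fin n) F), l ≠ [] ∧
      (∀ E ∈ l, E * E = E) ∧ A = l.prod := by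
  obtain ⟨l, hl, hp⟩ := ErdosIdem.isIdemProd_of_det_eq_zero n A hA
  refine ⟨1 :: l, List.cons_ne_nil _ _, ?_, ?_⟩
  · intro E hE
    rcases List.mem_cons.1 hE with rfl | h
    · exact Matrix.one_mul 1
    · exact hl E h
  · rw [List.prod_cons, Matrix.one_mul, hp]
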